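/- A finitely generated group G is LEF if and only if G is a direct limit of residually finite groups, i.e. there exist a sequence (L_n) of residually finite groups and homomorphisms φ_n : L_n → L_{n+1} such that G is isomorphic to the direct limit of this system. -/

import Mathlib

open FirstOrder

/-- The first-order language of groups: one constant (the identity), one unary function
symbol (inversion), one binary function symbol (multiplication) and no relation symbols. -/
def GroupLang : FirstOrder.Language where
  Functions := fun n =>
    match n with
    | 0 => Unit
    | 1 => Unit
    | 2 => Unit
    | _ => Empty
  Relations := fun _ => Empty

/-- Every group is a structure for the language of groups in the natural way. -/
instance groupLangStructure (G : Type*) [Group G] : GroupLang.Structure G where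
  funMap := fun {n} f x =>
    match n, f, x with
    | 0, _, _ => 1
    | 1, _, x => (x 0)⁻¹
    | 2, _, x => x 0 * x 1
  RelMap := fun {n} r _ => r.elim

/-- A group is residually finite if every nontrivial element has nontrivial image under
some homomorphism to a finite group. -/
def ResiduallyFinite (G : Type*) [Group G] : Prop :=
  ∀ g : G, g ≠ 1 → ∃ (F : GrpCat.{0}) (φ : G →* ↥F), Finite ↥F ∧ φ g ≠ 1

/-- A group `G` is approximable by a class `C` of groups if for every finite subset `F` of
`G` there is a member `H` of `C` and a map `ξ : G → H`, injective on `F`, preserving all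
products which stay inside `F`. -/
def Approximable (G : Type*) [Group G] (C : GrpCat.{u} → Prop) : Prop :=
  ∀ F : Finset G, ∃ H : GrpCat.{u}, C H ∧ ∃ ξ : G → ↥H,
    Set.InjOn ξ (F : Set G) ∧
      ∀ g ∈ F, ∀ h ∈ F, g * h ∈ F → ξ (g * h) = ξ g * ξ h

universe u

/-- A group is LEF if it is approximable by the class of finite groups. -/
def LEF (G : Type*) [Group G] : Prop :=
  Approximable G (fun H : GrpCat.{u} => Finite ↥H)

/-- `G` is (isomorphic to) the direct limit of the directed system of groups `L` with
transition maps `f`, via the compatible cocone maps `ψ`. -/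
def IsDirectLimit (G : Type*) [Group G] (L : ℕ → GrpCat.{u})
    (f : ∀ n m : ℕ, n ≤ m → (↥(L n) →* ↥(L m))) (ψ : ∀ n : ℕ, ↥(L n) →* G) : Prop :=
  (∀ (n : ℕ) (x : ↥(L n)), f n n le_rfl x = x) ∧
  (∀ (n m k : ℕ) (hnm : n ≤ m) (hmk : m ≤ k) (x : ↥(L n)),
    f m k hmk (f n m hnm x) = f n k (hnm.trans hmk) x) ∧
  (∀ (n m : ℕ) (h : n ≤ m) (x : ↥(L n)), ψ m (f n m h x) = ψ n x) ∧
  (∀ g : G, ∃ (n : ℕ) (x : ↥(L n)), ψ n x = g) ∧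
  (∀ (n : ℕ) (x : ↥(L n)), ψ n x = 1 → ∃ (m : ℕ) (h : n ≤ m), f n m h x = 1)

universe v

private lemma exists_sep {K : Type v} [Group K] (hRF : ResiduallyFinite K) (z : K) :
    ∃ (A : GrpCat.{0}) (φ : K →* ↥A), Finite ↥A ∧ (z ≠ 1 → φ z ≠ 1) := by
  by_cases hz : z = 1
  · exact ⟨GrpCat.of PUnit, 1, inferInstance, fun h => absurd hz h⟩
  · obtain ⟨A, φ, hfin, hne⟩ := hRF z hz
    exact ⟨A, φ, hfin, fun _ => hne⟩

private lemma rev_dir {G : Type u} [Group G] (L : ℕ → GrpCat.{u})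
    (f : ∀ n m : ℕ, n ≤ m → (↥(L n) →* ↥(L m))) (ψ : ∀ n : ℕ, ↥(L n) →* G)
    (hRF : ∀ n, ResiduallyFinite ↥(L n)) (hlim : IsDirectLimit G L f ψ) :
    LEF.{v} G := by
  classical
  unfold LEF Approximable
  obtain ⟨h1, h2, h3, h4, h5⟩ := hlim
  intro F
  choose n x hx using h4
  set N : ℕ := F.sup n with hN
  have hxx : ∀ g : G, ∃ y : ↥(L N), (g ∈ F → ψ N y = g) := by
    intro g
    by_cases hg : g ∈ F
    · exact ⟨f (n g) N (Finset.le_sup hg) (x g), fun _ => (h3 _ _ _ _).trans (hx g)⟩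
    · exact ⟨1, fun h => absurd h hg⟩
  choose x₁ hx₁ using hxx
  have hrel : ∀ p : G × G, ∃ (m : ℕ) (hm : N ≤ m),
      p.1 ∈ F → p.2 ∈ F → p.1 * p.2 ∈ F →
        f N m hm ((x₁ (p.1 * p.2))⁻¹ * (x₁ p.1 * x₁ p.2)) = 1 := by
    rintro ⟨g, h⟩
    by_cases hc : g ∈ F ∧ h ∈ F ∧ g * h ∈ F
    · obtain ⟨hg, hh, hgh⟩ := hc
      have hone : ψ N ((x₁ (g * h))⁻¹ * (x₁ g * x₁ h)) = 1 := by
        rw [map_mul, map_mul, map_inv, hx₁ _ hg, hx₁ _ hh, hx₁ _ hgh]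
        group
      obtain ⟨m, hm, hm1⟩ := h5 N _ hone
      exact ⟨m, hm, fun _ _ _ => hm1⟩
    · exact ⟨N, le_rfl, fun hg hh hgh => absurd ⟨hg, hh, hgh⟩ hc⟩
  choose m hm hrelf using hrel
  set M : ℕ := N ⊔ (F ×ˢ F).sup m with hM
  have hNM : N ≤ M := le_sup_left
  set y : G → ↥(L M) := fun g => f N M hNM (x₁ g) with hy
  have hψy : ∀ g ∈ F, ψ M (y g) = g := fun g hg => (h3 _ _ _ _).trans (hx₁ g hg)
  have hmul : ∀ g ∈ F, ∀ h ∈ F, g * h ∈ F → y (g * h) = y g * y h := by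
    intro g hg h hh hgh
    have hmM : m (g, h) ≤ M :=
      le_sup_of_le_right (Finset.le_sup (Finset.mem_product.mpr ⟨hg, hh⟩))
    have e1 := hrelf (g, h) hg hh hgh
    have e2 := h2 N (m (g, h)) M (hm (g, h)) hmM ((x₁ (g * h))⁻¹ * (x₁ g * x₁ h))
    rw [e1, map_one] at e2
    have e3 : (y (g * h))⁻¹ * (y g * y h) = 1 := by
      simpa [hy, map_mul, map_inv] using e2.symm
    exact inv_mul_eq_one.mp e3
  -- separation
  choose A φA hAfin hAne using fun z : ↥(L M) => exists_sep (hRF M) z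
  set ι := (↥(F ×ˢ F) : Type u) with hι
  set z : ι → ↥(L M) := fun p => (y p.val.1)⁻¹ * y p.val.2 with hz
  haveI : ∀ p : ι, Finite ↥(A (z p)) := fun p => hAfin (z p)
  set B : Type u := (∀ p : ι, ↥(A (z p))) with hB
  haveI hBfin : Finite B := by infer_instance
  haveI : Small.{v} B := by infer_instance
  set e : B ≃* Shrink.{v} B := (Shrink.mulEquiv).symm with he
  refine ⟨GrpCat.of (Shrink.{v} B), ?_, fun g => e (fun p => φA (z p) (y g)), ?_, ?_⟩
  · show Finite (Shrink.{v} B)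
    exact Finite.of_equiv B (equivShrink B)
  · intro g hg h hh heq
    by_contra hne
    have hweq := e.injective heq
    have hp : ((g, h) : G × G) ∈ F ×ˢ F := Finset.mem_product.mpr ⟨hg, hh⟩
    set p : ι := ⟨(g, h), hp⟩ with hpdef
    have hcomp : φA (z p) (y g) = φA (z p) (y h) := congrFun hweq p
    have hz1 : z p ≠ 1 := by
      intro h1
      apply hne
      have h2' := congrArg (ψ M) h1
      rw [map_one, hz] at h2'
      simp only [map_mul, map_inv] at h2'
      rw [hψy g hg, hψy h hh] at h2'
      exact inv_mul_eq_one.mp h2'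
    apply hAne (z p) hz1
    show φA (z p) ((y g)⁻¹ * y h) = 1
    rw [map_mul, map_inv, hcomp]
    group
  · intro g hg h hh hgh
    refine (congrArg e ?_).trans (map_mul e _ _)
    funext p
    show φA (z p) (y (g * h)) = φA (z p) (y g) * φA (z p) (y h)
    rw [hmul g hg h hh hgh, map_mul]

private lemma fwd_dir {G : Type u} [Group G] (hfg : Group.FG G) (hlef : LEF.{v} G) :
    ∃ (L : ℕ → GrpCat.{u}) (f : ∀ n m : ℕ, n ≤ m → (↥(L n) →* ↥(L m)))
      (ψ : ∀ n : ℕ, ↥(L n) →* G),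
      (∀ n, ResiduallyFinite ↥(L n)) ∧ IsDirectLimit G L f ψ := by
  classical
  unfold LEF Approximable at hlef
  obtain ⟨S, hScl⟩ : ∃ S : Finset G, Subgroup.closure (S : Set G) = ⊤ := by
    obtain ⟨k, S, _, h⟩ := Group.fg_iff'.mp hfg
    exact ⟨S, h⟩
  set π : FreeGroup ↥S →* G := FreeGroup.lift ((↑) : ↥S → G) with hπ
  have hπs : Function.Surjective π := by
    rw [← MonoidHom.range_eq_top, hπ, FreeGroup.range_lift_eq_closure, Subtype.range_coe]
    exact hScl
  have hfin : ∀ k : ℕ,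
      ((fun l : List (↥S × Bool) => π (FreeGroup.mk l)) '' {l | l.length ≤ k}).Finite :=
    fun k => (List.finite_length_le _ k).image _
  set Fs : ℕ → Finset G := fun k => (hfin k).toFinset with hFs
  have hmemF : ∀ (k : ℕ) (l : List (↥S × Bool)), l.length ≤ k → π (FreeGroup.mk l) ∈ Fs k := by
    intro k l hl
    rw [hFs]
    rw [Set.Finite.mem_toFinset]
    exact ⟨l, hl, rfl⟩
  have h1F : ∀ k, (1 : G) ∈ Fs k := by
    intro k
    have := hmemF k [] (by simp)
    simpa [show π (FreeGroup.mk []) = 1 from map_one π] using this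
  choose H hHfin ξ hξinj hξmul using fun k => hlef (Fs k)
  have hξ1 : ∀ k, ξ k 1 = 1 := by
    intro k
    have h := hξmul k 1 (h1F k) 1 (h1F k) (by rw [one_mul]; exact h1F k)
    rw [one_mul] at h
    exact left_eq_mul.mp h
  have hξinv : ∀ (k : ℕ) (a : G), a ∈ Fs k → a⁻¹ ∈ Fs k → ξ k a⁻¹ = (ξ k a)⁻¹ := by
    intro k a ha hai
    have h := hξmul k a ha a⁻¹ hai (by rw [mul_inv_cancel]; exact h1F k)
    rw [mul_inv_cancel, hξ1] at h
    exact eq_inv_of_mul_eq_one_right h.symm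
  set θ : ∀ k : ℕ, FreeGroup ↥S →* ↥(H k) :=
    fun k => FreeGroup.lift (fun s => ξ k (π (FreeGroup.of s))) with hθ
  have key : ∀ (k : ℕ) (l : List (↥S × Bool)), l.length ≤ k →
      θ k (FreeGroup.mk l) = ξ k (π (FreeGroup.mk l)) := by
    intro k l
    induction l with
    | nil =>
      intro _
      show θ k 1 = ξ k (π 1)
      rw [map_one, map_one, hξ1]
    | cons a l ih =>
      intro hlen
      have hll : l.length ≤ k := le_trans (by simp) hlen
      have h1k : ([a] : List (↥S × Bool)).length ≤ k := le_trans (by simp) hlen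
      have hsingle : θ k (FreeGroup.mk [a]) = ξ k (π (FreeGroup.mk [a])) := by
        obtain ⟨s, b⟩ := a
        cases b
        · have hmkinv : FreeGroup.mk [(s, false)] = (FreeGroup.of s)⁻¹ := by
            rw [show (FreeGroup.of s)⁻¹ = FreeGroup.mk (FreeGroup.invRev [(s, true)]) from
              FreeGroup.inv_mk]
            rfl
          have hof : π (FreeGroup.of s) ∈ Fs k := hmemF k [(s, true)] h1k
          have hofi : (π (FreeGroup.of s))⁻¹ ∈ Fs k := by
            have := hmemF k [(s, false)] h1k
            rw [hmkinv, map_inv] at this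
            exact this
          rw [hmkinv, map_inv, map_inv, hξinv k _ hof hofi]
          rw [show θ k (FreeGroup.of s) = ξ k (π (FreeGroup.of s)) from FreeGroup.lift_apply_of]
        · exact FreeGroup.lift_apply_of
      have hcons : FreeGroup.mk (a :: l) = FreeGroup.mk [a] * FreeGroup.mk l := by
        rw [FreeGroup.mul_mk]
        rfl
      rw [hcons, map_mul, hsingle, ih hll, map_mul]
      exact (hξmul k _ (hmemF k [a] h1k) _ (hmemF k l hll)
        (by rw [← map_mul, FreeGroup.mul_mk]; exact hmemF k ([a] ++ l) (by simpa using hlen))).symm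
  set ℓ : FreeGroup ↥S → ℕ := fun x => x.toWord.length with hℓ
  have keyx : ∀ (k : ℕ) (x : FreeGroup ↥S), ℓ x ≤ k → θ k x = ξ k (π x) := by
    intro k x h
    conv_lhs => rw [← FreeGroup.mk_toWord (x := x)]
    conv_rhs => rw [← FreeGroup.mk_toWord (x := x)]
    exact key k _ h
  have hmemx : ∀ (k : ℕ) (x : FreeGroup ↥S), ℓ x ≤ k → π x ∈ Fs k := by
    intro k x h
    conv => rw [← FreeGroup.mk_toWord (x := x)]
    exact hmemF k _ h
  have hθ1iff : ∀ (k : ℕ) (x : FreeGroup ↥S), ℓ x ≤ k → (θ k x = 1 ↔ π x = 1) := by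
    intro k x h
    constructor
    · intro h1
      rw [keyx k x h] at h1
      exact hξinj k (hmemx k x h) (h1F k) (by rw [h1, hξ1])
    · intro h1
      rw [keyx k x h, h1, hξ1]
  -- the subgroups M n
  set M : ℕ → Subgroup (FreeGroup ↥S) :=
    fun n => (Pi.monoidHom (fun m : ℕ => θ (max n m))).ker with hM
  have hMmem : ∀ (n : ℕ) (w : FreeGroup ↥S), w ∈ M n ↔ ∀ k, n ≤ k → θ k w = 1 := by
    intro n w
    rw [hM]
    simp only [MonoidHom.mem_ker]
    constructor
    · intro h k hk
      have h2 := congrFun (congrArg (fun q => q) h) k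
      have h3 : θ (max n k) w = 1 := by
        have : Pi.monoidHom (fun m : ℕ => θ (max n m)) w k = (1 : (m : ℕ) → ↥(H (max n m))) k := by
          rw [h]
        exact this
      rwa [max_eq_right hk] at h3
    · intro h
      funext m
      have := h (max n m) (le_max_left n m)
      exact this
  haveI hMnorm : ∀ n, (M n).Normal := by
    intro n
    rw [hM]
    exact MonoidHom.normal_ker _
  have hMleπ : ∀ n, M n ≤ π.ker := by
    intro n w hw
    have hθw := (hMmem n w).mp hw (max n (ℓ w)) (le_max_left _ _)
    rw [MonoidHom.mem_ker]
    exact (hθ1iff (max n (ℓ w)) w (le_max_right _ _)).mp hθw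
  have hMmono : ∀ n m : ℕ, n ≤ m → M n ≤ M m := by
    intro n m hnm w hw
    rw [hMmem] at hw ⊢
    exact fun k hk => hw k (hnm.trans hk)
  set L : ℕ → GrpCat.{u} := fun n => GrpCat.of (FreeGroup ↥S ⧸ M n) with hL
  set f : ∀ n m : ℕ, n ≤ m → (↥(L n) →* ↥(L m)) := fun n m h =>
    QuotientGroup.map (M n) (M m) (MonoidHom.id _)
      (fun x hx => by simpa using hMmono n m h hx) with hf
  set ψ : ∀ n : ℕ, ↥(L n) →* G := fun n => QuotientGroup.lift (M n) π (hMleπ n) with hψ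
  refine ⟨L, f, ψ, ?_, ?_, ?_, ?_, ?_, ?_⟩
  · -- residually finite
    intro n g hg
    revert hg
    refine QuotientGroup.induction_on g ?_
    intro w hw
    have hwM : w ∉ M n := fun h => hw ((QuotientGroup.eq_one_iff w).mpr h)
    rw [hMmem] at hwM
    push_neg at hwM
    obtain ⟨k, hk, hθk⟩ := hwM
    haveI : Finite ↥(H k) := hHfin k
    have hker : M n ≤ (θ k).ker := by
      intro x hx
      rw [MonoidHom.mem_ker]
      exact (hMmem n x).mp hx k hk
    refine ⟨GrpCat.of (Shrink.{0} ↥(H k)),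
      ((Shrink.mulEquiv : Shrink.{0} ↥(H k) ≃* ↥(H k)).symm.toMonoidHom).comp
        (QuotientGroup.lift (M n) (θ k) hker), ?_, ?_⟩
    · show Finite (Shrink.{0} ↥(H k))
      exact Finite.of_equiv _ (equivShrink _).symm
    · intro h1
      apply hθk
      have h2 := congrArg (Shrink.mulEquiv : Shrink.{0} ↥(H k) ≃* ↥(H k)) h1
      simp at h2
      exact h2
  · intro n x
    refine QuotientGroup.induction_on x ?_
    intro w
    rfl
  · intro n m k hnm hmk x
    refine QuotientGroup.induction_on x ?_
    intro w
    rfl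
  · intro n m h x
    refine QuotientGroup.induction_on x ?_
    intro w
    rfl
  · intro g
    obtain ⟨w, hw⟩ := hπs g
    exact ⟨0, QuotientGroup.mk w, hw⟩
  · intro n x
    refine QuotientGroup.induction_on x ?_
    intro w hw1
    have hπw : π w = 1 := hw1
    refine ⟨max n (ℓ w), le_max_left _ _, ?_⟩
    show QuotientGroup.mk (MonoidHom.id _ w) = (1 : FreeGroup ↥S ⧸ M (max n (ℓ w)))
    rw [QuotientGroup.eq_one_iff]
    rw [hMmem]
    intro k hk
    simp only [MonoidHom.id_apply]
    rw [keyx k w (le_trans (le_max_right _ _) hk), hπw, hξ1]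

/-- A finitely generated group is LEF if and only if it is a direct limit of residually
finite groups. -/
theorem lef_iff_direct_limit_of_residually_finite (G : Type u) [Group G]
    (hfg : Group.FG G) :
    LEF G ↔
      ∃ (L : ℕ → GrpCat.{u}) (f : ∀ n m : ℕ, n ≤ m → (↥(L n) →* ↥(L m)))
        (ψ : ∀ n : ℕ, ↥(L n) →* G),
        (∀ n, ResiduallyFinite ↥(L n)) ∧ IsDirectLimit G L f ψ := by
  constructor
  · exact fun h => fwd_dir hfg h
  · rintro ⟨L, f, ψ, hRF, hlim⟩
    exact rev_dir L f ψ hRF hlim
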